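/- Limit of the vigilant states under epidemic eradication: assume additionally that θ_i and γ_i are continuous on [0,1] and that θ_i(o) + γ_i(o) ≤ 2 − c for all o ∈ [0,1] and all i. If a trajectory of the coupled SIV-opinion model satisfying the standing assumptions has x^I(k) → 0 as k → ∞, then x_i^V(k) → θ_i(0)/(θ_i(0) + γ_i(0)) for every i ∈ {1,…,n}. -/

import Mathlib

open Filter

lemma contraction_to_zero (e ε : ℕ → ℝ) (r : ℝ) (hr0 : 0 ≤ r) (hr1 : r < 1)
    (hrec : ∀ k, |e (k+1)| ≤ r * |e k| + ε k)
    (hε : Tendsto ε atTop (nhds 0)) :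
    Tendsto e atTop (nhds 0) := by
  rw [Metric.tendsto_atTop]
  intro ε' hε'
  have h1r : 0 < 1 - r := by linarith
  set η := ε' * (1 - r) / 4 with hηdef
  have hηpos : 0 < η := by positivity
  obtain ⟨N, hN⟩ := (Metric.tendsto_atTop.mp hε) η hηpos
  have key : ∀ m, |e (N + m)| ≤ r ^ m * |e N| + η / (1 - r) := by
    intro m
    induction m with
    | zero => simp; positivity
    | succ m ih =>
      have hεb : ε (N + m) < η := by
        have h := hN (N + m) (Nat.le_add_right _ _)
        rw [Real.dist_eq, sub_zero] at h
        exact (le_abs_self _).trans_lt h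
      have h1 := hrec (N + m)
      have h2 : r * |e (N + m)| ≤ r * (r ^ m * |e N| + η / (1 - r)) :=
        mul_le_mul_of_nonneg_left ih hr0
      have h3 : r * (η / (1 - r)) + η = η / (1 - r) := by field_simp; ring
      calc |e (N + (m + 1))| = |e ((N + m) + 1)| := by ring_nf
        _ ≤ r * |e (N + m)| + ε (N + m) := h1
        _ ≤ r * (r ^ m * |e N| + η / (1 - r)) + η := by linarith
        _ = r ^ (m + 1) * |e N| + (r * (η / (1 - r)) + η) := by ring
        _ = r ^ (m + 1) * |e N| + η / (1 - r) := by rw [h3]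
  have hpow : Tendsto (fun m => r ^ m * |e N|) atTop (nhds 0) := by
    have := tendsto_pow_atTop_nhds_zero_of_lt_one hr0 hr1
    simpa using this.mul_const |e N|
  obtain ⟨M, hM⟩ := (Metric.tendsto_atTop.mp hpow) (ε' / 2) (by positivity)
  refine ⟨N + M, fun k hk => ?_⟩
  have hkN : N ≤ k := le_trans (Nat.le_add_right _ _) hk
  have hk' : k = N + (k - N) := by omega
  have hMle : M ≤ k - N := by omega
  have hb := key (k - N)
  have hmono : r ^ (k - N) ≤ r ^ M := pow_le_pow_of_le_one hr0 hr1.le hMle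
  have hMval := hM M le_rfl
  rw [Real.dist_eq, sub_zero, abs_of_nonneg (by positivity)] at hMval
  have h4 : r ^ (k - N) * |e N| ≤ r ^ M * |e N| :=
    mul_le_mul_of_nonneg_right hmono (abs_nonneg _)
  have h5 : η / (1 - r) = ε' / 4 := by rw [hηdef]; field_simp
  rw [Real.dist_eq, sub_zero]
  calc |e k| = |e (N + (k - N))| := by rw [← hk']
    _ ≤ r ^ (k - N) * |e N| + η / (1 - r) := hb
    _ ≤ r ^ M * |e N| + ε' / 4 := by rw [h5] at *; linarith
    _ < ε' / 2 + ε' / 4 := by linarith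
    _ < ε' := by linarith

theorem vigilant_limit_of_eradication {n : ℕ} (c : ℝ)
    (hc : c ∈ Set.Ioo (0:ℝ) 1)
    (δ φ : Fin n → ℝ) (β w : Fin n → Fin n → ℝ)
    (θ γ : Fin n → ℝ → ℝ)
    (hδ : ∀ i, δ i ∈ Set.Icc (0:ℝ) 1)
    (hβ : ∀ i j, β i j ∈ Set.Icc (0:ℝ) 1)
    (hθ : ∀ i, ∀ o' ∈ Set.Icc (0:ℝ) 1, θ i o' ∈ Set.Icc (0:ℝ) 1)
    (hγ : ∀ i, ∀ o' ∈ Set.Icc (0:ℝ) 1, γ i o' ∈ Set.Icc (0:ℝ) 1)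
    (hβθ : ∀ i, ∀ o' ∈ Set.Icc (0:ℝ) 1, (∑ j, β i j) + θ i o' ≤ 1)
    (hθγ : ∀ i, ∀ o' ∈ Set.Icc (0:ℝ) 1, c ≤ θ i o' + γ i o')
    (hθγ' : ∀ i, ∀ o' ∈ Set.Icc (0:ℝ) 1, θ i o' + γ i o' ≤ 2 - c)
    (hθcont : ∀ i, ContinuousOn (θ i) (Set.Icc (0:ℝ) 1))
    (hγcont : ∀ i, ContinuousOn (γ i) (Set.Icc (0:ℝ) 1))
    (hφ : ∀ i, φ i ∈ Set.Ioo (0:ℝ) 1)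
    (hw : ∀ i j, 0 ≤ w i j) (hwrow : ∀ i, ∑ j, w i j = 1)
    (xI xV o : ℕ → Fin n → ℝ)
    (hI : ∀ k i, xI (k+1) i =
      xI k i - δ i * xI k i + (1 - xI k i - xV k i) * ∑ j, β i j * xI k j)
    (hV : ∀ k i, xV (k+1) i =
      xV k i + δ i * xI k i - γ i (o k i) * xV k i
        + θ i (o k i) * (1 - xI k i - xV k i))
    (hO : ∀ k i, o (k+1) i =
      φ i * xI k i + (1 - φ i) * (o k i + (1 - o k i) * ∑ j, w i j * (o k j - o k i)))
    (hI0 : ∀ i, xI 0 i ∈ Set.Icc (0:ℝ) 1)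
    (hV0 : ∀ i, xV 0 i ∈ Set.Icc (0:ℝ) 1)
    (hO0 : ∀ i, o 0 i ∈ Set.Icc (0:ℝ) 1)
    (hIV0 : ∀ i, xI 0 i + xV 0 i ≤ 1)
    (hconv : Tendsto (fun k => xI k) atTop (nhds 0)) :
    ∀ i, Tendsto (fun k => xV k i) atTop (nhds (θ i 0 / (θ i 0 + γ i 0))) := by
  -- invariance
  have inv : ∀ k i, 0 ≤ xI k i ∧ xI k i + xV k i ≤ 1 ∧ 0 ≤ xV k i ∧
      0 ≤ o k i ∧ o k i ≤ 1 := by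
    intro k
    induction k with
    | zero => exact fun i => ⟨(hI0 i).1, hIV0 i, (hV0 i).1, (hO0 i).1, (hO0 i).2⟩
    | succ k ih =>
      intro i
      obtain ⟨hIk, hIVk, hVk, hOk0, hOk1⟩ := ih i
      have hIk1 : xI k i ≤ 1 := by linarith
      have hOmem : o k i ∈ Set.Icc (0:ℝ) 1 := ⟨hOk0, hOk1⟩
      have hθm := hθ i _ hOmem
      have hγm := hγ i _ hOmem
      have hβθm := hβθ i _ hOmem
      have hs0 : 0 ≤ ∑ j, β i j * xI k j :=
        Finset.sum_nonneg fun j _ => mul_nonneg (hβ i j).1 (ih j).1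
      have hs1 : ∑ j, β i j * xI k j ≤ ∑ j, β i j := by
        apply Finset.sum_le_sum
        intro j _
        have : xI k j ≤ 1 := by have := ih j; linarith [this.1, this.2.1, this.2.2.1]
        nlinarith [(hβ i j).1]
      set s := ∑ j, β i j * xI k j with hsdef
      have hδm := hδ i
      -- xI bounds
      have hIpos : 0 ≤ xI (k+1) i := by
        rw [hI]
        have h1 : 0 ≤ xI k i * (1 - δ i) := mul_nonneg hIk (by linarith [hδm.2])
        have h2 : 0 ≤ (1 - xI k i - xV k i) * s :=
          mul_nonneg (by linarith) hs0
        linarith [h1, h2]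
      have hIVsum : xI (k+1) i + xV (k+1) i ≤ 1 := by
        rw [hI, hV]
        have h1 : 0 ≤ (1 - xI k i - xV k i) * (1 - s - θ i (o k i)) :=
          mul_nonneg (by linarith) (by linarith)
        have h2 : 0 ≤ γ i (o k i) * xV k i := mul_nonneg hγm.1 hVk
        nlinarith [h1, h2]
      have hVpos : 0 ≤ xV (k+1) i := by
        rw [hV]
        have h1 : 0 ≤ xV k i * (1 - γ i (o k i)) := mul_nonneg hVk (by linarith [hγm.2])
        have h2 : 0 ≤ δ i * xI k i := mul_nonneg hδm.1 hIk
        have h3 : 0 ≤ θ i (o k i) * (1 - xI k i - xV k i) :=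
          mul_nonneg hθm.1 (by linarith)
        nlinarith [h1, h2, h3]
      -- opinion bounds
      have hsum_eq : ∑ j, w i j * (o k j - o k i) = (∑ j, w i j * o k j) - o k i := by
        simp only [mul_sub]
        rw [Finset.sum_sub_distrib, ← Finset.sum_mul, hwrow i, one_mul]
      have hu0 : 0 ≤ ∑ j, w i j * o k j :=
        Finset.sum_nonneg fun j _ => mul_nonneg (hw i j) (ih j).2.2.2.1
      have hu1 : ∑ j, w i j * o k j ≤ 1 := by
        calc ∑ j, w i j * o k j ≤ ∑ j, w i j := by
              apply Finset.sum_le_sum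
              intro j _
              nlinarith [(ih j).2.2.2.2, hw i j]
          _ = 1 := hwrow i
      set u := ∑ j, w i j * o k j with hudef
      have hE0 : 0 ≤ o k i + (1 - o k i) * ((∑ j, w i j * (o k j - o k i))) := by
        rw [hsum_eq]
        nlinarith [mul_nonneg (by linarith : (0:ℝ) ≤ 1 - o k i) hu0]
      have hE1 : o k i + (1 - o k i) * ((∑ j, w i j * (o k j - o k i))) ≤ 1 := by
        rw [hsum_eq]
        nlinarith [mul_nonneg (by linarith : (0:ℝ) ≤ 1 - o k i)
          (by linarith : (0:ℝ) ≤ 1 - u)]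
      have hφm := hφ i
      have hO0' : 0 ≤ o (k+1) i := by
        rw [hO]
        have h1 : 0 ≤ φ i * xI k i := mul_nonneg hφm.1.le hIk
        have h2 : 0 ≤ (1 - φ i) * (o k i + (1 - o k i) * ∑ j, w i j * (o k j - o k i)) :=
          mul_nonneg (by linarith [hφm.2]) hE0
        linarith
      have hO1' : o (k+1) i ≤ 1 := by
        rw [hO]
        have h1 : φ i * xI k i ≤ φ i := by nlinarith [hφm.1]
        have h2 : (1 - φ i) * (o k i + (1 - o k i) * ∑ j, w i j * (o k j - o k i))
            ≤ 1 - φ i := by nlinarith [hφm.2]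
        linarith
      exact ⟨hIpos, hIVsum, hVpos, hO0', hO1'⟩
  intro i
  haveI : Nonempty (Fin n) := ⟨i⟩
  have hne : (Finset.univ : Finset (Fin n)).Nonempty := Finset.univ_nonempty
  -- componentwise convergence of xI
  have hIcomp : ∀ j, Tendsto (fun k => xI k j) atTop (nhds 0) := by
    intro j
    have := (tendsto_pi_nhds.mp hconv) j
    simpa using this
  have hsumI : Tendsto (fun k => ∑ j, xI k j) atTop (nhds 0) := by
    have := tendsto_finset_sum Finset.univ (fun j _ => hIcomp j)
    simpa using this
  -- opinions tend to zero
  set M : ℕ → ℝ := fun k => Finset.univ.sup' hne (fun j => o k j) with hMdef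
  have hM0 : ∀ k, 0 ≤ M k := fun k =>
    le_trans (inv k i).2.2.2.1 (Finset.le_sup' _ (Finset.mem_univ i))
  set φm : ℝ := Finset.univ.inf' hne φ with hφmdef
  have hφm0 : 0 < φm := by
    rw [hφmdef, Finset.lt_inf'_iff]
    exact fun j _ => (hφ j).1
  have hφm1 : φm ≤ 1 := le_trans (Finset.inf'_le _ (Finset.mem_univ i)) (hφ i).2.le
  have hMrec : ∀ k, |M (k+1)| ≤ (1 - φm) * |M k| + ∑ j, xI k j := by
    intro k
    rw [abs_of_nonneg (hM0 (k+1)), abs_of_nonneg (hM0 k)]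
    apply Finset.sup'_le
    intro j _
    obtain ⟨hIk, hIVk, hVk, hOk0, hOk1⟩ := inv k j
    have hsum_eq : ∑ l, w j l * (o k l - o k j) = (∑ l, w j l * o k l) - o k j := by
      simp only [mul_sub]
      rw [Finset.sum_sub_distrib, ← Finset.sum_mul, hwrow j, one_mul]
    have huM : ∑ l, w j l * o k l ≤ M k := by
      calc ∑ l, w j l * o k l ≤ ∑ l, w j l * M k := by
            apply Finset.sum_le_sum
            intro l _
            exact mul_le_mul_of_nonneg_left
              (Finset.le_sup' _ (Finset.mem_univ l)) (hw j l)
        _ = M k := by rw [← Finset.sum_mul, hwrow j, one_mul]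
      -- end
    have hoM : o k j ≤ M k := Finset.le_sup' _ (Finset.mem_univ j)
    have hEM : o k j + (1 - o k j) * (∑ l, w j l * (o k l - o k j)) ≤ M k := by
      rw [hsum_eq]
      nlinarith [mul_nonneg (by linarith : (0:ℝ) ≤ 1 - o k j)
        (by linarith : (0:ℝ) ≤ M k - ∑ l, w j l * o k l),
        mul_nonneg hOk0 (by linarith : (0:ℝ) ≤ M k - o k j)]
    have hE0 : 0 ≤ o k j + (1 - o k j) * (∑ l, w j l * (o k l - o k j)) := by
      rw [hsum_eq]
      have hu0 : 0 ≤ ∑ l, w j l * o k l :=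
        Finset.sum_nonneg fun l _ => mul_nonneg (hw j l) (inv k l).2.2.2.1
      nlinarith [mul_nonneg (by linarith : (0:ℝ) ≤ 1 - o k j) hu0]
    have hφj := hφ j
    have hφmj : φm ≤ φ j := Finset.inf'_le _ (Finset.mem_univ j)
    have hxIs : xI k j ≤ ∑ l, xI k l :=
      Finset.single_le_sum (fun l _ => (inv k l).1) (Finset.mem_univ j)
    rw [hO]
    have h1 : φ j * xI k j ≤ ∑ l, xI k l := by nlinarith [hφj.2]
    have h2 : (1 - φ j) * (o k j + (1 - o k j) * ∑ l, w j l * (o k l - o k j))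
        ≤ (1 - φm) * M k := by
      apply mul_le_mul (by linarith) hEM hE0 (by linarith)
    linarith
  have hMtend : Tendsto M atTop (nhds 0) :=
    contraction_to_zero M (fun k => ∑ j, xI k j) (1 - φm)
      (by linarith) (by linarith) hMrec hsumI
  have hOtend : Tendsto (fun k => o k i) atTop (nhds 0) := by
    apply squeeze_zero (fun k => (inv k i).2.2.2.1)
      (fun k => Finset.le_sup' _ (Finset.mem_univ i)) hMtend
  -- limits of θ, γ along the trajectory
  have h0mem : (0:ℝ) ∈ Set.Icc (0:ℝ) 1 := ⟨le_refl _, zero_le_one⟩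
  have hOin : Tendsto (fun k => o k i) atTop (nhdsWithin 0 (Set.Icc (0:ℝ) 1)) := by
    rw [tendsto_nhdsWithin_iff]
    exact ⟨hOtend, Eventually.of_forall fun k => ⟨(inv k i).2.2.2.1, (inv k i).2.2.2.2⟩⟩
  have hθtend : Tendsto (fun k => θ i (o k i)) atTop (nhds (θ i 0)) :=
    (hθcont i 0 h0mem).tendsto.comp hOin
  have hγtend : Tendsto (fun k => γ i (o k i)) atTop (nhds (γ i 0)) :=
    (hγcont i 0 h0mem).tendsto.comp hOin
  -- final contraction
  have hden : 0 < θ i 0 + γ i 0 := lt_of_lt_of_le hc.1 (hθγ i 0 h0mem)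
  set L : ℝ := θ i 0 / (θ i 0 + γ i 0) with hLdef
  have hLeq : (θ i 0 + γ i 0) * L = θ i 0 := by
    rw [hLdef]; field_simp
  set e : ℕ → ℝ := fun k => xV k i - L with hedef
  set ε : ℕ → ℝ := fun k =>
    θ i (o k i) - (γ i (o k i) + θ i (o k i)) * L + (δ i - θ i (o k i)) * xI k i
    with hεdef
  have hεtend : Tendsto ε atTop (nhds 0) := by
    have h1 : Tendsto ε atTop
        (nhds (θ i 0 - (γ i 0 + θ i 0) * L + (δ i - θ i 0) * 0)) := by
      apply Tendsto.add
      · exact Tendsto.sub hθtend (Tendsto.mul_const L (hγtend.add hθtend))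
      · exact Tendsto.mul (tendsto_const_nhds.sub hθtend) (hIcomp i)
    have h2 : θ i 0 - (γ i 0 + θ i 0) * L + (δ i - θ i 0) * 0 = 0 := by
      linear_combination -hLeq
    rwa [h2] at h1
  have hrec : ∀ k, |e (k+1)| ≤ (1 - c) * |e k| + |ε k| := by
    intro k
    have hOmem : o k i ∈ Set.Icc (0:ℝ) 1 := ⟨(inv k i).2.2.2.1, (inv k i).2.2.2.2⟩
    have hge := hθγ i _ hOmem
    have hle := hθγ' i _ hOmem
    have heq : e (k+1) = (1 - γ i (o k i) - θ i (o k i)) * e k + ε k := by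
      rw [hedef, hεdef]
      simp only
      rw [hV]
      ring
    have hb : |1 - γ i (o k i) - θ i (o k i)| ≤ 1 - c := by
      rw [abs_le]; constructor <;> linarith
    calc |e (k+1)| = |(1 - γ i (o k i) - θ i (o k i)) * e k + ε k| := by rw [heq]
      _ ≤ |(1 - γ i (o k i) - θ i (o k i)) * e k| + |ε k| := abs_add_le _ _
      _ = |1 - γ i (o k i) - θ i (o k i)| * |e k| + |ε k| := by rw [abs_mul]
      _ ≤ (1 - c) * |e k| + |ε k| :=
          add_le_add_left (mul_le_mul_of_nonneg_right hb (abs_nonneg _)) _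
  have hεabs : Tendsto (fun k => |ε k|) atTop (nhds 0) := by
    have := hεtend.abs
    simpa using this
  have hetend : Tendsto e atTop (nhds 0) :=
    contraction_to_zero e (fun k => |ε k|) (1 - c)
      (by linarith [hc.2]) (by linarith [hc.1]) hrec hεabs
  have : Tendsto (fun k => e k + L) atTop (nhds (0 + L)) :=
    hetend.add_const L
  simpa [hedef] using this
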